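/- Let f₁ : E₁ → X and f₂ : E₂ → X be covering maps of the same space X, where E₁ and E₂ are both simply connected and locally path-connected. Fix x ∈ X, ẽ₁ ∈ f₁⁻¹(x), and ẽ₂ ∈ f₂⁻¹(x). Then there exists a homeomorphism h : E₁ → E₂ such that f₂ ∘ h = f₁ and h(ẽ₁) = ẽ₂ (the universal covering space is unique up to isomorphism of coverings). -/

import Mathlib

open unitInterval Set Topology

section Lifting

variable {E X A : Type*} [TopologicalSpace E] [TopologicalSpace X] [TopologicalSpace A]
variable {f : E → X}
variable [∀ x : X, Nonempty (f ⁻¹' {x})]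

theorem trivSection {F : Type*} [TopologicalSpace F] (T : Bundle.Trivialization F f)
    {Y : Type*} [TopologicalSpace Y] {u : Y → X} (hu : Continuous u)
    (hB : ∀ y, u y ∈ T.baseSet) {w : Y → E} (hw : Continuous w) (hws : ∀ y, w y ∈ T.source) :
    ∃ s : Y → E, Continuous s ∧ (∀ y, f (s y) = u y) ∧
      (∀ y, u y = f (w y) → s y = w y) ∧
      (∀ y y', u y = u y' → w y = w y' → s y = s y') := by
  refine ⟨fun y => T.toOpenPartialHomeomorph.symm (u y, (T (w y)).2), ?_, ?_, ?_, ?_⟩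
  · have hc1 : Continuous (fun y => T (w y)) :=
      T.toOpenPartialHomeomorph.continuousOn.comp_continuous hw hws
    have hc2 : Continuous fun y => (T (w y)).2 := hc1.snd
    exact T.toOpenPartialHomeomorph.continuousOn_symm.comp_continuous
      (hu.prodMk hc2) fun y => T.mem_target.2 (hB y)
  · exact fun y => T.proj_symm_apply (T.mem_target.2 (hB y))
  · intro y hy
    dsimp only
    have h1 : (u y, (T (w y)).2) = T (w y) := by
      refine Prod.ext ?_ rfl
      rw [hy, T.coe_fst (hws y)]
    rw [h1]
    exact T.toOpenPartialHomeomorph.left_inv (hws y)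
  · intro y y' h1 h2
    dsimp only
    rw [h1, h2]

theorem liftUnique (hf : IsCoveringMap f) {γ₁ γ₂ : I → E} (h₁ : Continuous γ₁)
    (h₂ : Continuous γ₂) (h : ∀ t, f (γ₁ t) = f (γ₂ t)) (h0 : γ₁ 0 = γ₂ 0) : γ₁ = γ₂ :=
  hf.eq_of_comp_eq h₁ h₂ (funext h) 0 h0

theorem exists_local_lift (hf : IsCoveringMap f) (H : C(A × I, X)) (g : C(A, E))
    (hg : ∀ a, f (g a) = H (a, 0)) (a₀ : A) :
    ∃ N : Set A, IsOpen N ∧ a₀ ∈ N ∧ ∃ L : C(N × I, E),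
      (∀ p : N × I, f (L p) = H (p.1, p.2)) ∧ ∀ a : N, L (a, 0) = g a := by
  classical
  have hmem : ∀ t : I, (a₀, t) ∈ H ⁻¹' (hf (H (a₀, t))).toTrivialization.baseSet :=
    fun t => (hf (H (a₀, t))).mem_toTrivialization_baseSet
  have hWopen : ∀ t : I, IsOpen (H ⁻¹' (hf (H (a₀, t))).toTrivialization.baseSet) :=
    fun t => (hf (H (a₀, t))).toTrivialization.open_baseSet.preimage H.continuous
  choose u v hu hv hau htv huv using fun t : I =>
    isOpen_prod_iff.1 (hWopen t) a₀ t (hmem t)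
  obtain ⟨s, hs⟩ := isCompact_univ.elim_finite_subcover v hv
    (fun t _ => mem_iUnion.2 ⟨t, htv t⟩)
  set N : Set A := ⋂ t ∈ s, u t with hN
  have hNopen : IsOpen N := isOpen_biInter_finset fun t _ => hu t
  have haN : a₀ ∈ N := mem_iInter₂.2 fun t _ => hau t
  have hcov : (univ : Set I) ⊆ ⋃ t : s, v t := by
    intro r hr
    obtain ⟨t, ht, hrt⟩ := mem_iUnion₂.1 (hs hr)
    exact mem_iUnion.2 ⟨⟨t, ht⟩, hrt⟩
  obtain ⟨δ, hδ, hball⟩ := lebesgue_number_lemma_of_metric isCompact_univ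
    (fun t : s => hv t) hcov
  obtain ⟨n, hn⟩ := exists_nat_one_div_lt hδ
  obtain ⟨c, hcmono, hgap, hc00, hctop⟩ : ∃ c : ℕ → I, (∀ k, c k ≤ c (k + 1)) ∧
      (∀ k, (c (k + 1) : ℝ) - c k ≤ 1 / ((n : ℝ) + 1)) ∧ c 0 = 0 ∧ c (n + 1) = 1 := by
    have hm0 : (0 : ℝ) < (n : ℝ) + 1 := by positivity
    refine ⟨fun k => ⟨min ((k : ℝ) / ((n : ℝ) + 1)) 1,
      Set.mem_Icc.2 ⟨le_min (by positivity) zero_le_one, min_le_right _ _⟩⟩, ?_, ?_, ?_, ?_⟩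
    · intro k
      rw [Subtype.mk_le_mk]
      refine min_le_min ?_ le_rfl
      gcongr
      exact_mod_cast Nat.le_succ k
    · intro k
      have h1m : (0 : ℝ) ≤ 1 / ((n : ℝ) + 1) := by positivity
      have hsplit : ((k : ℝ) + 1) / ((n : ℝ) + 1) = (k : ℝ) / ((n : ℝ) + 1) + 1 / ((n : ℝ) + 1) :=
        add_div _ _ _
      show min (((k + 1 : ℕ) : ℝ) / ((n : ℝ) + 1)) 1 - min ((k : ℝ) / ((n : ℝ) + 1)) 1
          ≤ 1 / ((n : ℝ) + 1)
      push_cast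
      rcases le_total (((k : ℝ) + 1) / ((n : ℝ) + 1)) 1 with h | h
      · have hk1 : (k : ℝ) / ((n : ℝ) + 1) ≤ 1 := le_trans (by rw [hsplit] at h ⊢; linarith) h
        rw [min_eq_left h, min_eq_left hk1]
        linarith
      · rw [min_eq_right h]
        rcases le_total ((k : ℝ) / ((n : ℝ) + 1)) 1 with h2 | h2
        · rw [min_eq_left h2]
          linarith
        · rw [min_eq_right h2]
          linarith
    · exact Subtype.ext (by simp)
    · apply Subtype.ext
      show min (((n + 1 : ℕ) : ℝ) / ((n : ℝ) + 1)) 1 = 1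
      push_cast
      rw [div_self (by positivity), min_self]
  have key : ∀ k : ℕ, ∃ x : X, ∀ a : A, a ∈ N → ∀ r : I, c k ≤ r → r ≤ c (k + 1) →
      H (a, r) ∈ (hf x).toTrivialization.baseSet := by
    intro k
    obtain ⟨t, ht⟩ := hball (c k) trivial
    refine ⟨H (a₀, (t : I)), fun a ha r h1 h2 => ?_⟩
    have h1' : (c k : ℝ) ≤ r := h1
    have h2' : (r : ℝ) ≤ c (k + 1) := h2
    have hrball : r ∈ Metric.ball (c k) δ := by
      rw [Metric.mem_ball, Subtype.dist_eq, Real.dist_eq, abs_of_nonneg (sub_nonneg.2 h1')]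
      calc (r : ℝ) - c k ≤ (c (k + 1) : ℝ) - c k := sub_le_sub_right h2' _
        _ ≤ 1 / ((n : ℝ) + 1) := hgap k
        _ < δ := hn
    exact huv (t : I) ⟨mem_iInter₂.1 ha (t : I) t.2, ht hrball⟩
  have main : ∀ k : ℕ, ∃ L : C(N × I, E),
      (∀ p : N × I, p.2 ≤ c k → f (L p) = H (p.1, p.2)) ∧
      (∀ a : N, L (a, 0) = g a) ∧
      (∀ p : N × I, c k ≤ p.2 → L p = L (p.1, c k)) := by
    intro k
    induction k with
    | zero =>
      refine ⟨⟨fun p => g p.1, g.continuous.comp (continuous_subtype_val.comp continuous_fst)⟩,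
        ?_, fun a => rfl, fun p _ => rfl⟩
      intro p hp
      have hp0 : p.2 = 0 := le_antisymm (hc00 ▸ hp) p.2.2.1
      dsimp only [ContinuousMap.coe_mk]
      rw [hp0]
      exact hg p.1
    | succ k ih =>
      obtain ⟨L, hLlift, hL0, hLplat⟩ := ih
      obtain ⟨x, hx⟩ := key k
      set T := (hf x).toTrivialization with hT
      have hclmem : ∀ t : I, max ((c k : ℝ)) (min (t : ℝ) (c (k + 1))) ∈ Icc (0 : ℝ) 1 :=
        fun t => ⟨le_trans (c k).2.1 (le_max_left _ _),
          max_le (c k).2.2 (le_trans (min_le_right _ _) (c (k + 1)).2.2)⟩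
      set cl : I → I := fun t => ⟨max ((c k : ℝ)) (min (t : ℝ) (c (k + 1))), hclmem t⟩ with hcl
      have hclcont : Continuous cl :=
        Continuous.subtype_mk
          (continuous_const.max (continuous_subtype_val.min continuous_const)) _
      have hclle : ∀ t : I, c k ≤ cl t ∧ cl t ≤ c (k + 1) := by
        intro t
        constructor
        · show (c k : ℝ) ≤ max ((c k : ℝ)) (min (t : ℝ) (c (k + 1)))
          exact le_max_left _ _
        · show max ((c k : ℝ)) (min (t : ℝ) (c (k + 1))) ≤ ((c (k + 1) : ℝ))
          exact max_le (hcmono k) (min_le_right _ _)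
      have hcleq : ∀ t : I, c k ≤ t → t ≤ c (k + 1) → cl t = t := by
        intro t h1 h2
        apply Subtype.ext
        show max ((c k : ℝ)) (min (t : ℝ) (c (k + 1))) = t
        rw [min_eq_left (show (t : ℝ) ≤ ((c (k + 1) : ℝ)) from h2),
          max_eq_right (show ((c k : ℝ)) ≤ (t : ℝ) from h1)]
      have hclhigh : ∀ t : I, c (k + 1) ≤ t → cl t = c (k + 1) := by
        intro t h1
        apply Subtype.ext
        show max ((c k : ℝ)) (min (t : ℝ) (c (k + 1))) = c (k + 1)
        rw [min_eq_right (show ((c (k + 1) : ℝ)) ≤ (t : ℝ) from h1),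
          max_eq_right (show ((c k : ℝ)) ≤ ((c (k + 1) : ℝ)) from hcmono k)]
      have hucont : Continuous fun p : N × I => H (p.1, cl p.2) :=
        H.continuous.comp ((continuous_subtype_val.comp continuous_fst).prodMk
          (hclcont.comp continuous_snd))
      have hclb : ∀ p : N × I, H (p.1, cl p.2) ∈ T.baseSet := fun p =>
        hx p.1 p.1.2 (cl p.2) (hclle p.2).1 (hclle p.2).2
      have hwcont : Continuous fun p : N × I => L (p.1, c k) :=
        L.continuous.comp (continuous_fst.prodMk continuous_const)
      have hwlift : ∀ p : N × I, f (L (p.1, c k)) = H (p.1, c k) :=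
        fun p => hLlift (p.1, c k) le_rfl
      have hws : ∀ p : N × I, L (p.1, c k) ∈ T.source := by
        intro p
        rw [T.mem_source, hwlift p]
        exact hx p.1 p.1.2 (c k) le_rfl (hcmono k)
      obtain ⟨sf, hscont, hslift, hseq, hscongr⟩ := trivSection T hucont hclb hwcont hws
      have hbdry : ∀ p : N × I, ((p.2 : ℝ)) = ((c k : ℝ)) → L p = sf p := by
        intro p hp
        have hp2 : p.2 = c k := Subtype.ext hp
        have h1 : L p = L (p.1, c k) := hLplat p hp2.ge
        rw [h1]
        refine (hseq p ?_).symm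
        rw [hwlift p, hcleq p.2 hp2.ge (hp2.trans_le (hcmono k)), hp2]
      refine ⟨⟨fun p => if ((p.2 : ℝ)) ≤ ((c k : ℝ)) then L p else sf p,
        Continuous.if_le L.continuous hscont (continuous_subtype_val.comp continuous_snd)
          continuous_const hbdry⟩, ?_, ?_, ?_⟩
      · intro p hp
        dsimp only [ContinuousMap.coe_mk]
        by_cases hle : ((p.2 : ℝ)) ≤ ((c k : ℝ))
        · rw [if_pos hle]
          exact hLlift p hle
        · rw [if_neg hle, hslift p,
            hcleq p.2 (show c k ≤ p.2 from le_of_not_ge hle) hp]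
      · intro a
        show (if (((0 : I) : ℝ)) ≤ ((c k : ℝ)) then L (a, 0) else sf (a, 0)) = g a
        rw [if_pos (show (((0 : I) : ℝ)) ≤ ((c k : ℝ)) from (c k).2.1)]
        exact hL0 a
      · intro p hp
        dsimp only [ContinuousMap.coe_mk]
        have hkk : ((c (k + 1) : ℝ)) ≤ ((c k : ℝ)) → c (k + 1) = c k :=
          fun h => le_antisymm h (hcmono k)
        by_cases hle : ((p.2 : ℝ)) ≤ ((c k : ℝ))
        · have hp2 : p.2 = c k := le_antisymm hle (le_trans (hcmono k) hp)
          have heq : c (k + 1) = c k := hkk (le_trans hp hle)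
          rw [if_pos hle, if_pos (show ((c (k + 1) : ℝ)) ≤ ((c k : ℝ)) from heq.le)]
          rw [hLplat p hp2.ge, heq]
        · rw [if_neg hle]
          by_cases h2 : ((c (k + 1) : ℝ)) ≤ ((c k : ℝ))
          · have heq : c (k + 1) = c k := hkk h2
            rw [if_pos h2, heq]
            exact hseq p (by rw [hwlift p, hclhigh p.2 hp, heq])
          · rw [if_neg h2]
            refine hscongr p (p.1, c (k + 1)) ?_ rfl
            show H (p.1, cl p.2) = H (p.1, cl (c (k + 1)))
            rw [hclhigh p.2 hp, hclhigh (c (k + 1)) le_rfl]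
  obtain ⟨L, hLl, hL0, _⟩ := main (n + 1)
  refine ⟨N, hNopen, haN, L, fun p => hLl p ?_, hL0⟩
  rw [hctop]
  exact p.2.2.2

theorem exists_lift_prod (hf : IsCoveringMap f) (H : C(A × I, X)) (g : C(A, E))
    (hg : ∀ a, f (g a) = H (a, 0)) :
    ∃ L : A × I → E, Continuous L ∧ (∀ p, f (L p) = H p) ∧ ∀ a, L (a, 0) = g a := by
  choose N hNopen hNmem L hLlift hL0 using exists_local_lift hf H g hg
  refine ⟨fun p => L p.1 (⟨p.1, hNmem p.1⟩, p.2), ?_,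
    fun p => hLlift p.1 (⟨p.1, hNmem p.1⟩, p.2), fun a => hL0 a ⟨a, hNmem a⟩⟩
  rw [continuous_iff_continuousAt]
  intro p₀
  have hkey : ∀ (a : A) (ha : a ∈ N p₀.1) (t : I),
      L a (⟨a, hNmem a⟩, t) = L p₀.1 (⟨a, ha⟩, t) := by
    intro a ha t
    have h1 : Continuous fun t : I => L a (⟨a, hNmem a⟩, t) :=
      (L a).continuous.comp (continuous_const.prodMk continuous_id)
    have h2 : Continuous fun t : I => L p₀.1 (⟨a, ha⟩, t) :=
      (L p₀.1).continuous.comp (continuous_const.prodMk continuous_id)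
    have h3 : ∀ t : I, f (L a (⟨a, hNmem a⟩, t)) = f (L p₀.1 (⟨a, ha⟩, t)) := by
      intro t
      rw [hLlift a (⟨a, hNmem a⟩, t), hLlift p₀.1 (⟨a, ha⟩, t)]
    have h0 : L a (⟨a, hNmem a⟩, 0) = L p₀.1 (⟨a, ha⟩, 0) := by
      rw [hL0 a ⟨a, hNmem a⟩, hL0 p₀.1 ⟨a, ha⟩]
    exact congrFun (liftUnique hf h1 h2 h3 h0) t
  have hCO : ContinuousOn (fun p : A × I => L p.1 (⟨p.1, hNmem p.1⟩, p.2))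
      ((N p₀.1) ×ˢ (univ : Set I)) := by
    rw [continuousOn_iff_continuous_restrict]
    have hres : ((N p₀.1) ×ˢ (univ : Set I)).domRestrict
        (fun p : A × I => L p.1 (⟨p.1, hNmem p.1⟩, p.2))
        = fun q : ((N p₀.1) ×ˢ (univ : Set I) : Set (A × I)) =>
            L p₀.1 (⟨(q : A × I).1, q.2.1⟩, (q : A × I).2) :=
      funext fun q => hkey (q : A × I).1 q.2.1 (q : A × I).2
    rw [hres]
    exact (L p₀.1).continuous.comp
      ((Continuous.subtype_mk continuous_subtype_val.fst _).prodMk continuous_subtype_val.snd)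
  exact hCO.continuousAt (((hNopen p₀.1).prod isOpen_univ).mem_nhds ⟨hNmem p₀.1, trivial⟩)

theorem exists_path_lift (hf : IsCoveringMap f) (γ : C(I, X)) (e : E) (he : f e = γ 0) :
    ∃ Γ : C(I, E), (∀ t, f (Γ t) = γ t) ∧ Γ 0 = e := by
  obtain ⟨L, hLc, hLl, hL0⟩ := exists_lift_prod (A := Unit) hf
    ⟨fun p => γ p.2, γ.continuous.comp continuous_snd⟩ ⟨fun _ => e, continuous_const⟩
    (fun _ => he)
  exact ⟨⟨fun t => L ((), t), hLc.comp (continuous_const.prodMk continuous_id)⟩,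
    fun t => hLl ((), t), hL0 ()⟩

theorem monodromy (hf : IsCoveringMap f) {x y : X} {γ₀ γ₁ : Path x y}
    (h : γ₀.Homotopic γ₁) {Γ₀ Γ₁ : C(I, E)} (hΓ₀ : ∀ t, f (Γ₀ t) = γ₀ t)
    (hΓ₁ : ∀ t, f (Γ₁ t) = γ₁ t) (h0 : Γ₀ 0 = Γ₁ 0) : Γ₀ 1 = Γ₁ 1 := by
  obtain ⟨F⟩ := h
  have he : f (Γ₀ 0) = x := by rw [hΓ₀ 0, γ₀.source]
  obtain ⟨L, hLc, hLl, hL0⟩ := exists_lift_prod (A := I) hf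
    ⟨fun p => F (p.1, p.2), F.continuous.comp (continuous_fst.prodMk continuous_snd)⟩
    ⟨fun _ => Γ₀ 0, continuous_const⟩ (fun s => by simp [he])
  have hl0 : (fun t => L (0, t)) = ⇑Γ₀ := by
    refine liftUnique hf ?_ Γ₀.continuous ?_ ?_
    · exact hLc.comp (continuous_const.prodMk continuous_id)
    · intro t
      show f (L (0, t)) = f (Γ₀ t)
      rw [hLl (0, t), hΓ₀ t]
      simp
    · show L (0, 0) = Γ₀ 0
      rw [hL0 0]
      rfl
  have hl1 : (fun t => L (1, t)) = ⇑Γ₁ := by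
    refine liftUnique hf ?_ Γ₁.continuous ?_ ?_
    · exact hLc.comp (continuous_const.prodMk continuous_id)
    · intro t
      show f (L (1, t)) = f (Γ₁ t)
      rw [hLl (1, t), hΓ₁ t]
      simp
    · show L (1, 0) = Γ₁ 0
      rw [hL0 1, ← h0]
      rfl
  have htop : L (0, 1) = L (1, 1) := by
    refine hf.const_of_comp (hLc.comp (continuous_id.prodMk continuous_const)) ?_ 0 1
    intro s s'
    show f (L (s, 1)) = f (L (s', 1))
    rw [hLl (s, 1), hLl (s', 1)]
    show F (s, 1) = F (s', 1)
    simp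
  rw [← congrFun hl0 1, ← congrFun hl1 1]
  exact htop

theorem exists_lift_of_simplyConnected {E' : Type*} [TopologicalSpace E']
    (hf : IsCoveringMap f) [SimplyConnectedSpace E'] [LocallyPathConnectedSpace E']
    {k : E' → X} (hk : Continuous k) (e' : E') (e : E) (he : f e = k e') :
    ∃ h : E' → E, Continuous h ∧ (∀ y, f (h y) = k y) ∧ h e' = e := by
  have hP : ∀ y : E', ∃ Γ : C(I, E),
      (∀ t, f (Γ t) = k ((PathConnectedSpace.somePath e' y) t)) ∧ Γ 0 = e := by
    intro y
    refine exists_path_lift hf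
      ⟨fun t => k ((PathConnectedSpace.somePath e' y) t),
        hk.comp (Path.continuous _)⟩ e ?_
    show f e = k ((PathConnectedSpace.somePath e' y) 0)
    rw [Path.source]
    exact he
  choose Γ hΓl hΓ0 using hP
  set h : E' → E := fun y => Γ y 1 with hh
  have wellDef : ∀ (y : E') (q : Path e' y) (Λ : C(I, E)),
      (∀ t, f (Λ t) = k (q t)) → Λ 0 = e → Λ 1 = h y := by
    intro y q Λ hΛl hΛ0
    have hhom : (q.map hk).Homotopic ((PathConnectedSpace.somePath e' y).map hk) := by
      have h1 := SimplyConnectedSpace.paths_homotopic q (PathConnectedSpace.somePath e' y)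
      exact Path.Homotopic.map h1 ⟨k, hk⟩
    exact monodromy hf hhom (fun t => hΛl t) (fun t => hΓl y t) (by rw [hΛ0, hΓ0 y])
  have hmain : ∀ y, f (h y) = k y := by
    intro y
    have h1 := hΓl y 1
    rwa [Path.target] at h1
  have he' : h e' = e := by
    have h1 := wellDef e' (Path.refl e') ⟨fun _ => e, continuous_const⟩
      (fun t => by rw [Path.refl_apply]; exact he) rfl
    exact h1.symm
  have hcont : Continuous h := by
    rw [continuous_iff_continuousAt]
    intro y₀
    set T := (hf (k y₀)).toTrivialization with hT
    have hb : k y₀ ∈ T.baseSet := (hf (k y₀)).mem_toTrivialization_baseSet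
    have hopen : IsOpen (k ⁻¹' T.baseSet) := T.open_baseSet.preimage hk
    set W := pathComponentIn (k ⁻¹' T.baseSet) y₀ with hW
    have hWopen : IsOpen W := hopen.pathComponentIn y₀
    have hy₀W : y₀ ∈ W := mem_pathComponentIn_self hb
    have hWsub : W ⊆ k ⁻¹' T.baseSet := pathComponentIn_subset
    have hWpath : IsPathConnected W := isPathConnected_pathComponentIn hb
    have hsrc : h y₀ ∈ T.source := by
      rw [T.mem_source, hmain y₀]
      exact hb
    have hloc : ∀ y ∈ W, h y = T.toOpenPartialHomeomorph.symm (k y, (T (h y₀)).2) := by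
      intro y hy
      have J : JoinedIn W y₀ y := hWpath.joinedIn y₀ hy₀W y hy
      set r : Path y₀ y := J.somePath with hr
      have hrW : ∀ t, r t ∈ W := J.somePath_mem
      set sfun : I → E := fun t => T.toOpenPartialHomeomorph.symm (k (r t), (T (h y₀)).2)
        with hsfun
      have hscont : Continuous sfun := by
        refine T.toOpenPartialHomeomorph.continuousOn_symm.comp_continuous
          (((hk.comp r.continuous).prodMk continuous_const)) ?_
        exact fun t => T.mem_target.2 (hWsub (hrW t))
      have hslift : ∀ t, f (sfun t) = k (r t) :=
        fun t => T.proj_symm_apply (T.mem_target.2 (hWsub (hrW t)))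
      have hs0 : sfun 0 = h y₀ := by
        have h1 : (k (r 0), (T (h y₀)).2) = T (h y₀) := by
          refine Prod.ext ?_ rfl
          rw [Path.source, T.coe_fst hsrc, hmain y₀]
        show T.toOpenPartialHomeomorph.symm (k (r 0), (T (h y₀)).2) = h y₀
        rw [h1]
        exact T.toOpenPartialHomeomorph.left_inv hsrc
      set Γ₀p : Path e (h y₀) :=
        { toContinuousMap := Γ y₀, source' := hΓ0 y₀, target' := rfl } with hΓ₀p
      set sp : Path (h y₀) (sfun 1) :=
        { toContinuousMap := ⟨sfun, hscont⟩, source' := hs0, target' := rfl } with hsp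
      have hlift' : ∀ t, f ((Γ₀p.trans sp) t)
          = k (((PathConnectedSpace.somePath e' y₀).trans r) t) := by
        intro t
        rw [Path.trans_apply, Path.trans_apply]
        split_ifs with ht
        · exact hΓl y₀ _
        · exact hslift _
      have hq := wellDef y ((PathConnectedSpace.somePath e' y₀).trans r)
        (Γ₀p.trans sp).toContinuousMap hlift' (Path.source _)
      have hq1 : (Γ₀p.trans sp).toContinuousMap 1 = sfun 1 := Path.target _
      rw [← hq, hq1, hsfun]
      show T.toOpenPartialHomeomorph.symm (k (r 1), (T (h y₀)).2) = _
      rw [Path.target]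
    have hCO : ContinuousOn (fun y => T.toOpenPartialHomeomorph.symm (k y, (T (h y₀)).2)) W := by
      refine T.toOpenPartialHomeomorph.continuousOn_symm.comp
        ((hk.prodMk continuous_const).continuousOn) ?_
      exact fun y hy => T.mem_target.2 (hWsub hy)
    exact (hCO.congr hloc).continuousAt (hWopen.mem_nhds hy₀W)
  exact ⟨h, hcont, hmain, he'⟩

end Lifting



/-- Two simply connected, locally path-connected covering spaces of the same
space `X` are isomorphic as coverings: there is a homeomorphism `h : E₁ → E₂` with
`f₂ ∘ h = f₁` carrying a chosen basepoint of one fiber to a chosen basepoint of the other. -/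
theorem stmt8 {E₁ E₂ X : Type*} [TopologicalSpace E₁] [TopologicalSpace E₂]
    [TopologicalSpace X]
    (f₁ : E₁ → X) (f₂ : E₂ → X)
    (hf₁ : IsCoveringMap f₁) (hsurj₁ : Function.Surjective f₁)
    (hf₂ : IsCoveringMap f₂) (hsurj₂ : Function.Surjective f₂)
    [SimplyConnectedSpace E₁] [LocallyPathConnectedSpace E₁]
    [SimplyConnectedSpace E₂] [LocallyPathConnectedSpace E₂]
    (x : X) (e₁ : E₁) (e₂ : E₂) (h₁ : f₁ e₁ = x) (h₂ : f₂ e₂ = x) :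
    ∃ h : E₁ ≃ₜ E₂, f₂ ∘ h = f₁ ∧ h e₁ = e₂ := by
  haveI : ∀ y, Nonempty (f₁ ⁻¹' {y}) := fun y => ⟨⟨_, (hsurj₁ y).choose_spec⟩⟩
  haveI : ∀ y, Nonempty (f₂ ⁻¹' {y}) := fun y => ⟨⟨_, (hsurj₂ y).choose_spec⟩⟩
  obtain ⟨h, hc, hl, he⟩ := exists_lift_of_simplyConnected (E' := E₁) hf₂
    hf₁.continuous e₁ e₂ (by rw [h₂, h₁])
  obtain ⟨h', hc', hl', he'⟩ := exists_lift_of_simplyConnected (E' := E₂) hf₁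
    hf₂.continuous e₂ e₁ (by rw [h₁, h₂])
  have hleft : h' ∘ h = id := by
    refine hf₁.eq_of_comp_eq (hc'.comp hc) continuous_id (funext fun a => ?_) e₁ ?_
    · show f₁ (h' (h a)) = f₁ a
      rw [hl' (h a), hl a]
    · show h' (h e₁) = e₁
      rw [he]
      exact he'
  have hright : h ∘ h' = id := by
    refine hf₂.eq_of_comp_eq (hc.comp hc') continuous_id (funext fun b => ?_) e₂ ?_
    · show f₂ (h (h' b)) = f₂ b
      rw [hl (h' b), hl' b]
    · show h (h' e₂) = e₂
      rw [he']
      exact he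
  exact ⟨⟨⟨h, h', fun a => congrFun hleft a, fun b => congrFun hright b⟩, hc, hc'⟩,
    funext hl, he⟩
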